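/- With T as above (γ*² g₁ g₂ < h₁ h₂), T is a contraction on ℝ≥0² with respect to the weighted sup-norm ‖(x,y)‖ = max(|x|/w₁, |y|/w₂) for suitable weights w₁, w₂ > 0, and hence the Gauss–Seidel iteration p₁(n+1) = γ*(σ² + g₂ p₂(n))/h₁, p₂(n+1) = γ*(σ² + g₁ p₁(n+1))/h₂ converges to the unique fixed point (p₁', p₂') from any starting point in ℝ≥0². -/

import Mathlib

open Filter

theorem best_response_contraction_and_convergence
    (γs σ2 g₁ g₂ h₁ h₂ : ℝ)
    (hγs : 0 < γs) (hσ : 0 < σ2) (hg₁ : 0 < g₁) (hg₂ : 0 < g₂)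
    (hh₁ : 0 < h₁) (hh₂ : 0 < h₂)
    (hfeas : γs ^ 2 * g₁ * g₂ < h₁ * h₂)
    (T : ℝ × ℝ → ℝ × ℝ)
    (hT : ∀ p : ℝ × ℝ, T p = (γs * (σ2 + g₂ * p.2) / h₁, γs * (σ2 + g₁ * p.1) / h₂))
    (p₁' p₂' : ℝ)
    (hp₁' : p₁' = γs * σ2 * (h₂ + γs * g₂) / (h₁ * h₂ - γs ^ 2 * g₁ * g₂))
    (hp₂' : p₂' = γs * σ2 * (h₁ + γs * g₁) / (h₁ * h₂ - γs ^ 2 * g₁ * g₂)) :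
    (∃ w₁ > (0 : ℝ), ∃ w₂ > (0 : ℝ), ∃ ρ : ℝ, 0 ≤ ρ ∧ ρ < 1 ∧
      ∀ x y : ℝ × ℝ, 0 ≤ x.1 → 0 ≤ x.2 → 0 ≤ y.1 → 0 ≤ y.2 →
        max (|(T x).1 - (T y).1| / w₁) (|(T x).2 - (T y).2| / w₂) ≤
          ρ * max (|x.1 - y.1| / w₁) (|x.2 - y.2| / w₂)) ∧
    ∀ q₁ q₂ : ℕ → ℝ, 0 ≤ q₁ 0 → 0 ≤ q₂ 0 →
      (∀ n, q₁ (n + 1) = γs * (σ2 + g₂ * q₂ n) / h₁) →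
      (∀ n, q₂ (n + 1) = γs * (σ2 + g₁ * q₁ (n + 1)) / h₂) →
      Tendsto q₁ atTop (nhds p₁') ∧ Tendsto q₂ atTop (nhds p₂') := by
  have hng : 0 < h₁ * h₂ - γs ^ 2 * g₁ * g₂ := by linarith
  set a := γs * g₂ / h₁ with ha
  set b := γs * g₁ / h₂ with hb
  have ha0 : 0 < a := by positivity
  have hb0 : 0 < b := by positivity
  have hab : a * b < 1 := by
    rw [ha, hb, div_mul_div_comm, div_lt_one (by positivity)]
    nlinarith
  set ρ := Real.sqrt (a * b) with hρdef
  have hρ0 : 0 ≤ ρ := Real.sqrt_nonneg _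
  have hρ1 : ρ < 1 := by
    rw [hρdef, show (1:ℝ) = Real.sqrt 1 by simp]
    exact Real.sqrt_lt_sqrt (by positivity) hab
  have hsa : 0 < Real.sqrt a := Real.sqrt_pos.mpr ha0
  have hsb : 0 < Real.sqrt b := Real.sqrt_pos.mpr hb0
  constructor
  · refine ⟨Real.sqrt a, hsa, Real.sqrt b, hsb, ρ, hρ0, hρ1, ?_⟩
    intro x y _ _ _ _
    rw [hT x, hT y]
    simp only
    have e1 : γs * (σ2 + g₂ * x.2) / h₁ - γs * (σ2 + g₂ * y.2) / h₁ = a * (x.2 - y.2) := by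
      rw [ha]; field_simp; ring
    have e2 : γs * (σ2 + g₁ * x.1) / h₂ - γs * (σ2 + g₁ * y.1) / h₂ = b * (x.1 - y.1) := by
      rw [hb]; field_simp; ring
    rw [e1, e2, abs_mul, abs_mul, abs_of_pos ha0, abs_of_pos hb0]
    have key1 : a / Real.sqrt a = ρ / Real.sqrt b := by
      rw [hρdef, Real.sqrt_mul ha0.le, mul_div_assoc, div_self hsb.ne', mul_one,
        Real.div_sqrt]
    have key2 : b / Real.sqrt b = ρ / Real.sqrt a := by
      rw [hρdef, Real.sqrt_mul ha0.le, mul_comm, mul_div_assoc, div_self hsa.ne', mul_one,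
        Real.div_sqrt]
    apply max_le
    · calc a * |x.2 - y.2| / Real.sqrt a = (a / Real.sqrt a) * |x.2 - y.2| := by ring
        _ = ρ * (|x.2 - y.2| / Real.sqrt b) := by rw [key1]; ring
        _ ≤ ρ * max (|x.1 - y.1| / Real.sqrt a) (|x.2 - y.2| / Real.sqrt b) := by
            exact mul_le_mul_of_nonneg_left (le_max_right _ _) hρ0
    · calc b * |x.1 - y.1| / Real.sqrt b = (b / Real.sqrt b) * |x.1 - y.1| := by ring
        _ = ρ * (|x.1 - y.1| / Real.sqrt a) := by rw [key2]; ring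
        _ ≤ ρ * max (|x.1 - y.1| / Real.sqrt a) (|x.2 - y.2| / Real.sqrt b) := by
            exact mul_le_mul_of_nonneg_left (le_max_left _ _) hρ0
  · intro q₁ q₂ _ _ hq1 hq2
    have hfix : p₁' = γs * σ2 / h₁ + a * (γs * σ2 / h₂) + (a * b) * p₁' := by
      rw [hp₁', ha, hb]; field_simp [hng.ne']; ring_nf
      have hne : h₂ * h₁ - γs ^ 2 * g₂ * g₁ ≠ 0 := by nlinarith
      field_simp; ring
    have step : ∀ n, q₁ (n + 2) - p₁' = (a * b) * (q₁ (n + 1) - p₁') := by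
      intro n
      have : q₁ (n + 2) = γs * σ2 / h₁ + a * (γs * σ2 / h₂) + (a * b) * q₁ (n + 1) := by
        rw [hq1 (n + 1), hq2 n, ha, hb]; field_simp; ring
      linear_combination this - hfix
    have closed : ∀ n, q₁ (n + 1) = p₁' + (a * b) ^ n * (q₁ 1 - p₁') := by
      intro n
      induction n with
      | zero => simp
      | succ m ih =>
        have := step m
        rw [ih] at this
        have : q₁ (m + 2) = p₁' + (a * b) * ((a * b) ^ m * (q₁ 1 - p₁')) := by linarith
        rw [this]; ring
    have geo : Tendsto (fun n : ℕ => (a * b) ^ n) atTop (nhds 0) :=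
      tendsto_pow_atTop_nhds_zero_of_lt_one (by positivity) hab
    have t1' : Tendsto (fun n : ℕ => q₁ (n + 1)) atTop (nhds p₁') := by
      have : Tendsto (fun n : ℕ => p₁' + (a * b) ^ n * (q₁ 1 - p₁')) atTop
          (nhds (p₁' + 0 * (q₁ 1 - p₁'))) :=
        tendsto_const_nhds.add (geo.mul_const _)
      rw [show p₁' + 0 * (q₁ 1 - p₁') = p₁' by ring] at this
      exact this.congr fun n => (closed n).symm
    have t1 : Tendsto q₁ atTop (nhds p₁') := by
      rwa [← tendsto_add_atTop_iff_nat 1]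
    refine ⟨t1, ?_⟩
    have hfix2 : p₂' = γs * σ2 / h₂ + b * p₁' := by
      rw [hp₂', hp₁', hb]; field_simp; ring
    have t2' : Tendsto (fun n : ℕ => q₂ (n + 1)) atTop (nhds p₂') := by
      have : Tendsto (fun n : ℕ => γs * σ2 / h₂ + b * q₁ (n + 1)) atTop
          (nhds (γs * σ2 / h₂ + b * p₁')) :=
        tendsto_const_nhds.add (t1'.const_mul _)
      have heq : ∀ n : ℕ, q₂ (n + 1) = γs * σ2 / h₂ + b * q₁ (n + 1) := by
        intro n; rw [hq2 n, hb]; field_simp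
      rw [← hfix2] at this
      simpa [heq] using this
    rwa [← tendsto_add_atTop_iff_nat 1]
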